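/- Let n ≥ 0 and 1 ≤ k ≤ n+1. Then H_+^{0:n} ⊆ F_+^{k:n}(I). More precisely, if h ∈ H_+^{0:n}, say h = h_{0;μ} with all h_{j;μ} finite, then h ∈ L^n with generalized derivatives h^{(j)} = h_{j;μ}/w_j for j ∈ {0, …, n}, and each h^{(j)} is nonnegative and nondecreasing on I; in particular h ∈ F_+^{1:n}(I). -/

import Mathlib

open MeasureTheory Set Filter
open scoped ENNReal

noncomputable section

/-- `g` is right-continuous at every point of `I` that is not the greatest point of `I`,
and left-continuous at the greatest point of `I` when the latter exists (the class `LD`). -/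
def IsLD (I : Set ℝ) (g : ℝ → ℝ) : Prop :=
  (∀ x ∈ I, (∃ y ∈ I, x < y) → Tendsto g (nhdsWithin x (I ∩ Ioi x)) (nhds (g x))) ∧
  (∀ x ∈ I, (∀ y ∈ I, y ≤ x) → Tendsto g (nhdsWithin x (I ∩ Iio x)) (nhds (g x)))

/-- `d 0, …, d n` is the system of generalized derivatives of `f` on `I` with respect to the
gauge sequence `w`; i.e., `f ∈ L^n` with `f^{(j)} = d j` for `j = 0, …, n`. -/
structure IsGenL (I : Set ℝ) (w : ℕ → ℝ → ℝ) (n : ℕ) (f : ℝ → ℝ) (d : ℕ → ℝ → ℝ) : Prop where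
  base : ∀ x ∈ I, f x = d 0 x * w 0 x
  ld : IsLD I (d n)
  integrable : ∀ j < n, ∀ z ∈ I, ∀ x ∈ I,
    IntervalIntegrable (fun u => d (j + 1) u * w (j + 1) u) volume z x
  deriv_eq : ∀ j < n, ∀ z ∈ I, ∀ x ∈ I,
    d j x = d j z + ∫ u in z..x, d (j + 1) u * w (j + 1) u

/-- `f ∈ F_+^{k:n}(I)` (with derivative system `d`): all the generalized derivatives
`f^{(j)} = d j` of orders `j = k-1, …, n` are nondecreasing on `I`. -/
def MemF (I : Set ℝ) (w : ℕ → ℝ → ℝ) (k n : ℕ) (f : ℝ → ℝ) (d : ℕ → ℝ → ℝ) : Prop :=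
  IsGenL I w n f d ∧ ∀ j, k - 1 ≤ j → j ≤ n → MonotoneOn (d j) I

/-- `w` is a sequence of positive, Borel-measurable, locally bounded gauge functions on `I`. -/
def IsGauge (I : Set ℝ) (w : ℕ → ℝ → ℝ) : Prop :=
  ∀ j, (∀ x ∈ I, 0 < w j x) ∧ Measurable (fun x : I => w j x) ∧
    ∀ K ⊆ I, IsCompact K → ∃ C, ∀ x ∈ K, |w j x| ≤ C

def pAux (w : ℕ → ℝ → ℝ) (t : ℝ) (m : ℕ) : ℕ → ℝ → ℝ
  | 0 => w m
  | (i + 1) => fun x => w (m - (i + 1)) x * ∫ u in t..x, pAux w t m i u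

/-- The `w`-polynomial `p_{t;j,m}` (for `t ∈ I`). -/
def pfun (w : ℕ → ℝ → ℝ) (t : ℝ) (j m : ℕ) : ℝ → ℝ := pAux w t m (m - j)

/-- The "positive part" `p^+_{t;j,m}`. -/
def pplus (w : ℕ → ℝ → ℝ) (t : ℝ) (j m : ℕ) : ℝ → ℝ := fun x =>
  if t ≤ x then pfun w t j m x else 0

def pAuxE (w : ℕ → ℝ → ℝ) (I : Set ℝ) (m : ℕ) : ℕ → ℝ → ℝ≥0∞
  | 0 => fun x => ENNReal.ofReal (w m x)
  | (i + 1) => fun x =>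
      ENNReal.ofReal (w (m - (i + 1)) x) * ∫⁻ u in I ∩ Iio x, pAuxE w I m i u

/-- `p_{a;j,m} : I → [0, ∞]`, where `a` is the left endpoint of `I` (the integrals from `a`
are taken over `(a, x) ∩ I = I ∩ Iio x`). -/
def pE (w : ℕ → ℝ → ℝ) (I : Set ℝ) (j m : ℕ) : ℝ → ℝ≥0∞ := pAuxE w I m (m - j)

/-- The filter of `x ↓ a` within `I`, `a` being the left endpoint of `I`. -/
def leftEndFilter (I : Set ℝ) : Filter ℝ := ⨅ c ∈ I, Filter.principal (I ∩ Iic c)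

/-- `ν(f) = ∫_I f dν ∈ [−∞, ∞]`. -/
def nuEval (ν : Measure ℝ) (I : Set ℝ) (f : ℝ → ℝ) : EReal :=
  ((∫⁻ x in I, ENNReal.ofReal (f x) ∂ν : ℝ≥0∞) : EReal)
    - ((∫⁻ x in I, ENNReal.ofReal (-f x) ∂ν : ℝ≥0∞) : EReal)

/-- The expectation `E g ∈ [−∞, ∞]` (in the extended sense). -/
def eval' {α : Type*} [MeasurableSpace α] (P : Measure α) (g : α → ℝ) : EReal :=
  ((∫⁻ a, ENNReal.ofReal (g a) ∂P : ℝ≥0∞) : EReal)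
    - ((∫⁻ a, ENNReal.ofReal (-g a) ∂P : ℝ≥0∞) : EReal)

namespace Stmt6Aux

open MeasureTheory Set Filter
open scoped ENNReal

/-! ### Basic recursion lemmas for `pfun` / `pplus` -/

lemma pfun_top (w : ℕ → ℝ → ℝ) (t : ℝ) (n : ℕ) : pfun w t n n = w n := by
  unfold pfun
  simp [pAux, Nat.sub_self]

lemma pfun_succ (w : ℕ → ℝ → ℝ) (t : ℝ) {j n : ℕ} (h : j < n) :
    pfun w t j n = fun x => w j x * ∫ u in t..x, pfun w t (j + 1) n u := by
  unfold pfun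
  rw [show n - j = (n - (j + 1)) + 1 by omega]
  show pAux w t n (n - (j + 1) + 1) = _
  have h2 : n - (n - (j + 1) + 1) = j := by omega
  simp [pAux, h2]

lemma pplus_of_le (w : ℕ → ℝ → ℝ) {t x : ℝ} (j m : ℕ) (h : t ≤ x) :
    pplus w t j m x = pfun w t j m x := if_pos h

lemma pplus_of_not_le (w : ℕ → ℝ → ℝ) {t x : ℝ} (j m : ℕ) (h : ¬ t ≤ x) :
    pplus w t j m x = 0 := if_neg h

lemma pplus_succ (w : ℕ → ℝ → ℝ) {t x : ℝ} {j n : ℕ} (hj : j < n) (h : t ≤ x) :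
    pplus w t j n x = w j x * ∫ u in t..x, pplus w t (j + 1) n u := by
  have key : (∫ u in t..x, pfun w t (j + 1) n u) = ∫ u in t..x, pplus w t (j + 1) n u := by
    refine intervalIntegral.integral_congr fun u hu => ?_
    rw [uIcc_of_le h] at hu
    exact (pplus_of_le w _ _ hu.1).symm
  simp only [pplus_of_le w _ _ h, pfun_succ w t hj]
  rw [key]

lemma pAux_nonneg {W : ℕ → ℝ → ℝ} (hW : ∀ j x, 0 ≤ W j x) (t : ℝ) (n : ℕ) :
    ∀ i, ∀ x, t ≤ x → 0 ≤ pAux W t n i x := by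
  intro i
  induction i with
  | zero => intro x _; exact hW n x
  | succ i ih =>
    intro x hx
    exact mul_nonneg (hW _ x)
      (intervalIntegral.integral_nonneg hx fun u hu => ih u hu.1)

lemma pplus_nonneg {W : ℕ → ℝ → ℝ} (hW : ∀ j x, 0 ≤ W j x) (t : ℝ) (j n : ℕ) (x : ℝ) :
    0 ≤ pplus W t j n x := by
  unfold pplus pfun
  split
  · exact pAux_nonneg hW t n _ x ‹_›
  · exact le_refl 0

/-! ### A good system of gauges -/

structure GoodW (I : Set ℝ) (W : ℕ → ℝ → ℝ) : Prop where
  meas : ∀ j, Measurable (W j)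
  nonneg : ∀ j x, 0 ≤ W j x
  bdd : ∀ j, ∀ c ∈ I, ∀ d ∈ I, ∃ C, ∀ x ∈ Icc c d, W j x ≤ C

variable {I : Set ℝ} {W : ℕ → ℝ → ℝ}

/-- Measurability and local boundedness of `pplus`. -/
lemma reg (hG : GoodW I W) {t : ℝ} (ht : t ∈ I) (n : ℕ) :
    ∀ j, j ≤ n → Measurable (pplus W t j n) ∧
      (∀ d ∈ I, ∃ C, ∀ x ∈ Icc t d, pplus W t j n x ≤ C) := by
  suffices H : ∀ i j, n ≤ j + i → j ≤ n → Measurable (pplus W t j n) ∧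
      (∀ d ∈ I, ∃ C, ∀ x ∈ Icc t d, pplus W t j n x ≤ C) by
    intro j hj; exact H n j (by omega) hj
  intro i
  induction i with
  | zero =>
    intro j h1 h2
    have hjn : j = n := by omega
    subst hjn
    have hrw : pplus W t j j = fun x => if t ≤ x then W j x else 0 := by
      funext x
      unfold pplus
      rw [pfun_top]
    constructor
    · rw [hrw]
      exact Measurable.ite measurableSet_Ici (hG.meas j) measurable_const
    · intro d hd
      obtain ⟨C, hC⟩ := hG.bdd j t ht d hd
      refine ⟨C, fun x hx => ?_⟩
      rw [hrw]
      simp only [if_pos hx.1]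
      exact hC x hx
  | succ i ih =>
    intro j h1 h2
    by_cases hn : n ≤ j + i
    · exact ih j hn h2
    · have hj : j < n := by omega
      obtain ⟨hm, hb⟩ := ih (j + 1) (by omega) (by omega)
      set f := pplus W t (j + 1) n with hf
      have hrep : ∀ x, t ≤ x →
          pplus W t j n x
            = W j x * (∫⁻ u in Ioc t x, ENNReal.ofReal (f u)).toReal := by
        intro x hx
        rw [pplus_succ W hj hx, intervalIntegral.integral_of_le hx,
          integral_eq_lintegral_of_nonneg_ae
            (ae_of_all _ fun u => pplus_nonneg hG.nonneg t (j + 1) n u)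
            hm.aestronglyMeasurable.restrict]
      have hΦm : Measurable fun x => (∫⁻ u in Ioc t x, ENNReal.ofReal (f u)).toReal := by
        apply Measurable.ennreal_toReal
        apply Monotone.measurable
        intro x y hxy
        exact lintegral_mono_set (Ioc_subset_Ioc_right hxy)
      constructor
      · have : pplus W t j n = fun x =>
            if t ≤ x then W j x * (∫⁻ u in Ioc t x, ENNReal.ofReal (f u)).toReal else 0 := by
          funext x
          by_cases hx : t ≤ x
          · rw [if_pos hx, hrep x hx]
          · rw [if_neg hx, pplus_of_not_le W _ _ hx]
        rw [this]
        exact Measurable.ite measurableSet_Ici ((hG.meas j).mul hΦm) measurable_const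
      · intro d hd
        by_cases htd : t ≤ d
        · obtain ⟨Cw, hCw⟩ := hG.bdd j t ht d hd
          obtain ⟨Cf, hCf⟩ := hb d hd
          set CΦ := (ENNReal.ofReal (max Cf 0) * ENNReal.ofReal (d - t)).toReal with hCΦ
          have hΦ : ∀ x ∈ Icc t d, (∫⁻ u in Ioc t x, ENNReal.ofReal (f u)).toReal ≤ CΦ := by
            intro x hx
            have h1 : (∫⁻ u in Ioc t x, ENNReal.ofReal (f u))
                ≤ ENNReal.ofReal (max Cf 0) * ENNReal.ofReal (d - t) := by
              calc (∫⁻ u in Ioc t x, ENNReal.ofReal (f u))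
                  ≤ ∫⁻ u in Ioc t d, ENNReal.ofReal (f u) :=
                    lintegral_mono_set (Ioc_subset_Ioc_right hx.2)
                _ ≤ ∫⁻ _ in Ioc t d, ENNReal.ofReal (max Cf 0) :=
                    setLIntegral_mono measurable_const fun u hu =>
                      ENNReal.ofReal_le_ofReal
                        ((hCf u ⟨hu.1.le, hu.2⟩).trans (le_max_left _ _))
                _ = ENNReal.ofReal (max Cf 0) * volume (Ioc t d) := setLIntegral_const _ _
                _ = _ := by rw [Real.volume_Ioc]
            exact ENNReal.toReal_mono
              (ENNReal.mul_ne_top ENNReal.ofReal_ne_top ENNReal.ofReal_ne_top) h1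
          have hCw0 : 0 ≤ Cw := le_trans (hG.nonneg j t) (hCw t ⟨le_rfl, htd⟩)
          refine ⟨Cw * CΦ, fun x hx => ?_⟩
          rw [hrep x hx.1]
          exact mul_le_mul (hCw x hx) (hΦ x hx) ENNReal.toReal_nonneg hCw0
        · exact ⟨0, fun x hx => absurd (hx.1.trans hx.2) htd⟩

lemma integrableOn_pplus (hG : GoodW I W) {t x : ℝ} (ht : t ∈ I) (hx : x ∈ I)
    {j n : ℕ} (hj : j ≤ n) : IntegrableOn (pplus W t j n) (Ioc t x) volume := by
  rcases le_or_gt t x with h | h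
  · obtain ⟨hm, hb⟩ := reg hG ht n j hj
    obtain ⟨C, hC⟩ := hb x hx
    refine Measure.integrableOn_of_bounded (M := C) measure_Ioc_lt_top.ne
      hm.aestronglyMeasurable ?_
    refine (ae_restrict_iff' measurableSet_Ioc).2 (ae_of_all _ fun u hu => ?_)
    rw [Real.norm_eq_abs, abs_of_nonneg (pplus_nonneg hG.nonneg t j n u)]
    exact hC u ⟨hu.1.le, hu.2⟩
  · rw [Ioc_eq_empty (not_lt.2 h.le)]
    exact integrableOn_empty

lemma lint_pplus_ne_top (hG : GoodW I W) {t x : ℝ} (ht : t ∈ I) (hx : x ∈ I)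
    {j n : ℕ} (hj : j ≤ n) :
    (∫⁻ u in Ioc t x, ENNReal.ofReal (pplus W t j n u)) ≠ ⊤ :=
  (integrableOn_pplus hG ht hx hj).setLIntegral_lt_top.ne

lemma pplus_rep (hG : GoodW I W) {t x : ℝ} (ht : t ∈ I) {j n : ℕ} (hj : j < n) (h : t ≤ x) :
    pplus W t j n x
      = W j x * (∫⁻ u in Ioc t x, ENNReal.ofReal (pplus W t (j + 1) n u)).toReal := by
  rw [pplus_succ W hj h, intervalIntegral.integral_of_le h,
    integral_eq_lintegral_of_nonneg_ae
      (ae_of_all _ fun u => pplus_nonneg hG.nonneg t (j + 1) n u)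
      ((reg hG ht n (j + 1) hj).1).aestronglyMeasurable.restrict]

/-! ### A jointly measurable `ℝ≥0∞`-valued model of `pplus` -/

def pT (W : ℕ → ℝ → ℝ) (n : ℕ) : ℕ → ℝ × ℝ → ℝ≥0∞
  | 0 => fun q => if q.1 ≤ q.2 then ENNReal.ofReal (W n q.2) else 0
  | (i + 1) => fun q =>
      if q.1 ≤ q.2 then
        ENNReal.ofReal (W (n - (i + 1)) q.2) * ∫⁻ u in Ioc q.1 q.2, pT W n i (q.1, u)
      else 0

lemma pT_of_not_le {n i : ℕ} {q : ℝ × ℝ} (h : ¬ q.1 ≤ q.2) : pT W n i q = 0 := by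
  cases i <;> · simp only [pT]; rw [if_neg h]

lemma measurable_lint_pT (hW : ∀ j, Measurable (W j)) (n i : ℕ)
    (hi : Measurable (pT W n i)) :
    Measurable fun q : ℝ × ℝ => ∫⁻ u in Ioc q.1 q.2, pT W n i (q.1, u) := by
  have hrw : (fun q : ℝ × ℝ => ∫⁻ u in Ioc q.1 q.2, pT W n i (q.1, u)) =
      fun q => ∫⁻ u, ({p : (ℝ × ℝ) × ℝ | p.1.1 < p.2 ∧ p.2 ≤ p.1.2}.indicator
        (fun p => pT W n i (p.1.1, p.2)) (q, u)) := by
    funext q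
    rw [← lintegral_indicator measurableSet_Ioc]
    congr 1
  rw [hrw]
  apply Measurable.lintegral_prod_right'
  apply Measurable.indicator
  · exact hi.comp (measurable_fst.fst.prodMk measurable_snd)
  · exact (measurableSet_lt measurable_fst.fst measurable_snd).inter
      (measurableSet_le measurable_snd measurable_fst.snd)

lemma measurable_pT (hW : ∀ j, Measurable (W j)) (n : ℕ) :
    ∀ i, Measurable (pT W n i) := by
  intro i
  induction i with
  | zero =>
    simp only [pT]
    exact Measurable.ite (measurableSet_le measurable_fst measurable_snd)
      (ENNReal.measurable_ofReal.comp ((hW n).comp measurable_snd)) measurable_const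
  | succ i ih =>
    simp only [pT]
    refine Measurable.ite (measurableSet_le measurable_fst measurable_snd)
      (Measurable.mul (ENNReal.measurable_ofReal.comp ((hW _).comp measurable_snd))
        (measurable_lint_pT hW n i ih)) measurable_const

lemma pT_eq (hI : I.OrdConnected) (hG : GoodW I W) {t : ℝ} (ht : t ∈ I) (n : ℕ) :
    ∀ i ≤ n, ∀ x ∈ I,
      pT W n i (t, x) = ENNReal.ofReal (pplus W t (n - i) n x) ∧ pT W n i (t, x) ≠ ⊤ := by
  intro i
  induction i with
  | zero =>
    intro _ x hx
    have : pT W n 0 (t, x) = ENNReal.ofReal (pplus W t (n - 0) n x) := by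
      by_cases h : t ≤ x
      · simp only [pT]
        rw [if_pos h, Nat.sub_zero, pplus_of_le W _ _ h, pfun_top]
      · simp only [pT]
        rw [if_neg h, pplus_of_not_le W _ _ h, ENNReal.ofReal_zero]
    exact ⟨this, by rw [this]; exact ENNReal.ofReal_ne_top⟩
  | succ i ih =>
    intro hi x hx
    have hji : n - (i + 1) < n := by omega
    have hj1 : n - (i + 1) + 1 = n - i := by omega
    by_cases h : t ≤ x
    · have hIoc : ∀ u ∈ Ioc t x, u ∈ I := fun u hu => hI.out ht hx ⟨hu.1.le, hu.2⟩
      have hinner : (∫⁻ u in Ioc t x, pT W n i (t, u))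
          = ∫⁻ u in Ioc t x, ENNReal.ofReal (pplus W t (n - (i + 1) + 1) n u) := by
        refine setLIntegral_congr_fun measurableSet_Ioc (fun u hu => ?_)
        rw [(ih (by omega) u (hIoc u hu)).1, hj1]
      have hfin : (∫⁻ u in Ioc t x, ENNReal.ofReal (pplus W t (n - (i + 1) + 1) n u)) ≠ ⊤ :=
        lint_pplus_ne_top hG ht hx (by omega)
      have hmain : pT W n (i + 1) (t, x) = ENNReal.ofReal (pplus W t (n - (i + 1)) n x) := by
        simp only [pT]
        rw [if_pos h, hinner, pplus_rep hG ht hji h, ENNReal.ofReal_mul (hG.nonneg _ x),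
          ENNReal.ofReal_toReal hfin]
      exact ⟨hmain, by rw [hmain]; exact ENNReal.ofReal_ne_top⟩
    · have h0 : pT W n (i + 1) (t, x) = 0 := pT_of_not_le h
      rw [h0, pplus_of_not_le W _ _ h, ENNReal.ofReal_zero]
      exact ⟨rfl, ENNReal.zero_ne_top⟩

/-! ### The normalized kernel `gT` -/

def gT (W : ℕ → ℝ → ℝ) (n j : ℕ) (q : ℝ × ℝ) : ℝ≥0∞ :=
  if q.1 ≤ q.2 then
    (if j = n then 1 else ∫⁻ u in Ioc q.1 q.2, pT W n (n - (j + 1)) (q.1, u))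
  else 0

lemma measurable_gT (hW : ∀ j, Measurable (W j)) (n j : ℕ) : Measurable (gT W n j) := by
  unfold gT
  refine Measurable.ite (measurableSet_le measurable_fst measurable_snd) ?_ measurable_const
  by_cases hj : j = n
  · simp only [if_pos hj]; exact measurable_const
  · simp only [if_neg hj]
    exact measurable_lint_pT hW n _ (measurable_pT hW n _)

lemma gT_mono (n j : ℕ) (t : ℝ) : Monotone fun x => gT W n j (t, x) := by
  intro x y hxy
  unfold gT
  simp only
  by_cases hx : t ≤ x
  · rw [if_pos hx, if_pos (hx.trans hxy)]
    by_cases hj : j = n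
    · simp [hj]
    · rw [if_neg hj, if_neg hj]
      exact lintegral_mono_set (Ioc_subset_Ioc_right hxy)
  · rw [if_neg hx]
    exact zero_le

lemma gT_eq (hI : I.OrdConnected) (hG : GoodW I W) {t x : ℝ} (ht : t ∈ I) (hx : x ∈ I)
    {j n : ℕ} (hj : j ≤ n) :
    ENNReal.ofReal (pplus W t j n x) = ENNReal.ofReal (W j x) * gT W n j (t, x) := by
  by_cases h : t ≤ x
  · by_cases hjn : j = n
    · subst hjn
      unfold gT
      rw [if_pos h, if_pos rfl, mul_one, pplus_of_le W _ _ h, pfun_top]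
    · have hj' : j < n := lt_of_le_of_ne hj hjn
      unfold gT
      rw [if_pos h, if_neg hjn]
      have hinner : (∫⁻ u in Ioc t x, pT W n (n - (j + 1)) (t, u))
          = ∫⁻ u in Ioc t x, ENNReal.ofReal (pplus W t (j + 1) n u) := by
        refine setLIntegral_congr_fun measurableSet_Ioc (fun u hu => ?_)
        have huI : u ∈ I := hI.out ht hx ⟨hu.1.le, hu.2⟩
        rw [(pT_eq hI hG ht n (n - (j + 1)) (by omega) u huI).1,
          show n - (n - (j + 1)) = j + 1 by omega]
      rw [hinner, pplus_rep hG ht hj' h, ENNReal.ofReal_mul (hG.nonneg _ x),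
        ENNReal.ofReal_toReal (lint_pplus_ne_top hG ht hx hj')]
  · unfold gT
    rw [if_neg h, mul_zero, pplus_of_not_le W _ _ h, ENNReal.ofReal_zero]

/-! ### Replacing `w` by its globalized version -/

lemma pAux_congr {w : ℕ → ℝ → ℝ} (hI : I.OrdConnected)
    (hWI : ∀ j, ∀ x ∈ I, W j x = w j x) {t : ℝ} (ht : t ∈ I) (n : ℕ) :
    ∀ i, ∀ x ∈ I, t ≤ x → pAux W t n i x = pAux w t n i x := by
  intro i
  induction i with
  | zero => intro x hx _; exact hWI n x hx
  | succ i ih =>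
    intro x hx hxt
    simp only [pAux]
    rw [hWI _ x hx]
    congr 1
    refine intervalIntegral.integral_congr fun u hu => ?_
    rw [uIcc_of_le hxt] at hu
    exact ih u (hI.out ht hx hu) hu.1

lemma pplus_congr {w : ℕ → ℝ → ℝ} (hI : I.OrdConnected)
    (hWI : ∀ j, ∀ x ∈ I, W j x = w j x) {t x : ℝ} (ht : t ∈ I) (hx : x ∈ I) (j n : ℕ) :
    pplus W t j n x = pplus w t j n x := by
  unfold pplus pfun
  split
  · exact pAux_congr hI hWI ht n _ x hx ‹_›
  · rfl

end Stmt6Aux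

/-- Proposition `H in F`: `H_+^{0:n} ⊆ F_+^{k:n}(I)`; more precisely
`h = h_{0;μ}` is in `L^n` with generalized derivatives `h_{j;μ}/w_j`, all nonnegative and
nondecreasing on `I`. -/
theorem stmt_6 (I : Set ℝ) (hI : I.OrdConnected) (hIne : ∃ p ∈ I, ∃ q ∈ I, p < q)
    (w : ℕ → ℝ → ℝ) (hw : IsGauge I w)
    (n k : ℕ) (hk : 1 ≤ k) (hkn : k ≤ n + 1)
    (μ : Measure ℝ)
    (hμb : ∀ x ∈ I, (∀ y ∈ I, y ≤ x) → μ {x} = 0)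
    (hfin : ∀ j ≤ n, ∀ x ∈ I, (∫⁻ t in I, ENNReal.ofReal (pplus w t j n x) ∂μ) ≠ ⊤)
    (h : ℝ → ℝ)
    (hh : ∀ x ∈ I, h x = (∫⁻ t in I, ENNReal.ofReal (pplus w t 0 n x) ∂μ).toReal) :
    IsGenL I w n h
      (fun j x => (∫⁻ t in I, ENNReal.ofReal (pplus w t j n x) ∂μ).toReal / w j x) ∧
    (∀ j ≤ n,
      (∀ x ∈ I, 0 ≤ (∫⁻ t in I, ENNReal.ofReal (pplus w t j n x) ∂μ).toReal / w j x) ∧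
      MonotoneOn
        (fun x => (∫⁻ t in I, ENNReal.ofReal (pplus w t j n x) ∂μ).toReal / w j x) I) ∧
    MemF I w k n h
      (fun j x => (∫⁻ t in I, ENNReal.ofReal (pplus w t j n x) ∂μ).toReal / w j x) := by
  classical
  have hImeas : MeasurableSet I := hI.measurableSet
  have hwpos : ∀ j, ∀ x ∈ I, 0 < w j x := fun j => (hw j).1
  -- the globalized gauges
  set W : ℕ → ℝ → ℝ := fun j => I.indicator (w j) with hWdef
  have hWI : ∀ j, ∀ x ∈ I, W j x = w j x := fun j x hx => indicator_of_mem hx _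
  have hWmeas : ∀ j, Measurable (W j) := by
    intro j
    have he : MeasurableEmbedding ((↑) : I → ℝ) := MeasurableEmbedding.subtype_coe hImeas
    have hm := he.measurable_extend (hw j).2.1
      (measurable_const : Measurable fun _ : ℝ => (0 : ℝ))
    have heq : W j = Function.extend ((↑) : I → ℝ) (fun x : I => w j x) fun _ => 0 := by
      funext x
      by_cases hx : x ∈ I
      · rw [show W j x = w j x from hWI j x hx]
        exact (Subtype.coe_injective.extend_apply (fun x : I => w j x) (fun _ => 0)
          ⟨x, hx⟩).symm
      · rw [show W j x = 0 from indicator_of_notMem hx _, Function.extend_apply']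
        rintro ⟨a, rfl⟩
        exact hx a.2
    rw [heq]; exact hm
  have hG : Stmt6Aux.GoodW I W := by
    refine ⟨hWmeas, ?_, ?_⟩
    · intro j x
      exact indicator_nonneg (fun y hy => ((hw j).1 y hy).le) x
    · intro j c hc d hd
      obtain ⟨C, hC⟩ := (hw j).2.2 (Icc c d) (hI.out hc hd) isCompact_Icc
      exact ⟨C, fun x hx => by
        rw [hWI j x (hI.out hc hd hx)]
        exact (le_abs_self _).trans (hC x hx)⟩
  -- switching the gauges inside the lintegrals
  have hswitch : ∀ (j : ℕ) (x : ℝ), x ∈ I →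
      (∫⁻ t in I, ENNReal.ofReal (pplus w t j n x) ∂μ)
        = ∫⁻ t in I, ENNReal.ofReal (pplus W t j n x) ∂μ := by
    intro j x hx
    refine lintegral_congr_ae ((ae_restrict_iff' hImeas).2 (ae_of_all _ fun t ht => ?_))
    show ENNReal.ofReal (pplus w t j n x) = ENNReal.ofReal (pplus W t j n x)
    rw [Stmt6Aux.pplus_congr hI hWI ht hx]
  set Q : ℕ → ℝ → ℝ≥0∞ := fun j x => ∫⁻ t in I, Stmt6Aux.gT W n j (t, x) ∂μ with hQdef
  have hC1 : ∀ j, j ≤ n → ∀ x ∈ I,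
      (∫⁻ t in I, ENNReal.ofReal (pplus w t j n x) ∂μ)
        = ENNReal.ofReal (w j x) * Q j x := by
    intro j hj x hx
    rw [hswitch j x hx]
    have heq : (∫⁻ t in I, ENNReal.ofReal (pplus W t j n x) ∂μ)
        = ∫⁻ t in I, ENNReal.ofReal (W j x) * Stmt6Aux.gT W n j (t, x) ∂μ := by
      refine lintegral_congr_ae ((ae_restrict_iff' hImeas).2 (ae_of_all _ fun t ht => ?_))
      show ENNReal.ofReal (pplus W t j n x) = ENNReal.ofReal (W j x) * Stmt6Aux.gT W n j (t, x)
      exact Stmt6Aux.gT_eq hI hG ht hx hj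
    rw [heq, lintegral_const_mul' _ _ ENNReal.ofReal_ne_top, hWI j x hx]
  have hC2 : ∀ j, j ≤ n → ∀ x ∈ I, Q j x ≠ ⊤ := by
    intro j hj x hx htop
    apply hfin j hj x hx
    rw [hC1 j hj x hx, htop, ENNReal.mul_top (ENNReal.ofReal_pos.2 (hwpos j x hx)).ne']
  have hC3 : ∀ j, j ≤ n → ∀ x ∈ I,
      (∫⁻ t in I, ENNReal.ofReal (pplus w t j n x) ∂μ).toReal / w j x = (Q j x).toReal := by
    intro j hj x hx
    rw [hC1 j hj x hx, ENNReal.toReal_mul, ENNReal.toReal_ofReal (hwpos j x hx).le,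
      mul_div_cancel_left₀ _ (hwpos j x hx).ne']
  have hmono : ∀ j, j ≤ n → MonotoneOn
      (fun x => (∫⁻ t in I, ENNReal.ofReal (pplus w t j n x) ∂μ).toReal / w j x) I := by
    intro j hj x hx y hy hxy
    simp only
    rw [hC3 j hj x hx, hC3 j hj y hy]
    exact ENNReal.toReal_mono (hC2 j hj y hy)
      (lintegral_mono fun t => Stmt6Aux.gT_mono n j t hxy)
  have hnonneg : ∀ j, ∀ x ∈ I,
      0 ≤ (∫⁻ t in I, ENNReal.ofReal (pplus w t j n x) ∂μ).toReal / w j x :=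
    fun j x hx => div_nonneg ENNReal.toReal_nonneg (hwpos j x hx).le
  -- the cdf formula for the top derivative
  have hHn : ∀ x ∈ I, (∫⁻ t in I, ENNReal.ofReal (pplus w t n n x) ∂μ)
      = ENNReal.ofReal (w n x) * μ (I ∩ Iic x) := by
    intro x hx
    have hpt : ∀ t : ℝ, ENNReal.ofReal (pplus w t n n x)
        = (Iic x).indicator (fun _ => ENNReal.ofReal (w n x)) t := by
      intro t
      unfold pplus
      rw [Stmt6Aux.pfun_top]
      by_cases hle : t ≤ x
      · rw [if_pos hle, indicator_of_mem (mem_Iic.2 hle)]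
      · rw [if_neg hle, indicator_of_notMem (by simpa using hle), ENNReal.ofReal_zero]
    simp_rw [hpt]
    rw [lintegral_indicator measurableSet_Iic, setLIntegral_const,
      Measure.restrict_apply measurableSet_Iic, Set.inter_comm]
  have hμfin : ∀ x ∈ I, μ (I ∩ Iic x) ≠ ⊤ := by
    intro x hx htop
    apply hfin n le_rfl x hx
    rw [hHn x hx, htop, ENNReal.mul_top (ENNReal.ofReal_pos.2 (hwpos n x hx)).ne']
  have hdn : ∀ x ∈ I, (∫⁻ t in I, ENNReal.ofReal (pplus w t n n x) ∂μ).toReal / w n x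
      = (μ (I ∩ Iic x)).toReal := by
    intro x hx
    rw [hHn x hx, ENNReal.toReal_mul, ENNReal.toReal_ofReal (hwpos n x hx).le,
      mul_div_cancel_left₀ _ (hwpos n x hx).ne']
  -- restriction of the integrals to `I ∩ Iic x`
  have hvanish : ∀ (x : ℝ) (F : ℝ → ℝ≥0∞), (∀ t ∈ I, t ∉ Iic x → F t = 0) →
      ∫⁻ t in I, F t ∂μ = ∫⁻ t in I ∩ Iic x, F t ∂μ := by
    intro x F hF
    have hmeas2 : MeasurableSet (I \ (I ∩ Iic x)) := hImeas.diff (hImeas.inter measurableSet_Iic)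
    calc ∫⁻ t in I, F t ∂μ
        = ∫⁻ t in (I ∩ Iic x) ∪ (I \ (I ∩ Iic x)), F t ∂μ := by
          rw [union_diff_cancel inter_subset_left]
      _ = (∫⁻ t in I ∩ Iic x, F t ∂μ) + ∫⁻ t in I \ (I ∩ Iic x), F t ∂μ :=
          lintegral_union hmeas2 disjoint_sdiff_right
      _ = ∫⁻ t in I ∩ Iic x, F t ∂μ := by
          have hz : ∫⁻ t in I \ (I ∩ Iic x), F t ∂μ = 0 := by
            rw [lintegral_congr_ae ((ae_restrict_iff' hmeas2).2
              (ae_of_all _ fun t ht => hF t ht.1 fun hc => ht.2 ⟨ht.1, hc⟩))]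
            exact lintegral_zero
          rw [hz, add_zero]
  have hμSfin : ∀ x ∈ I, IsFiniteMeasure (μ.restrict (I ∩ Iic x)) := by
    intro x hx
    exact ⟨by rw [Measure.restrict_apply_univ]; exact (hμfin x hx).lt_top⟩
  -- measurable version of `h_{j;μ}` below a point of `I`
  have hHJmeas : ∀ j, j ≤ n → ∀ x ∈ I, ∃ R : ℝ → ℝ≥0∞, Measurable R ∧
      ∀ u ∈ I, u ≤ x → (∫⁻ t in I, ENNReal.ofReal (pplus w t j n u) ∂μ) = R u := by
    intro j hj x hx
    haveI := hμSfin x hx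
    refine ⟨fun u => ∫⁻ t in I ∩ Iic x, Stmt6Aux.pT W n (n - j) (t, u) ∂μ, ?_, ?_⟩
    · exact Measurable.lintegral_prod_right'
        ((Stmt6Aux.measurable_pT hWmeas n (n - j)).comp (measurable_snd.prodMk measurable_fst))
    · intro u huI hux
      rw [hswitch j u huI]
      have h1 : (∫⁻ t in I, ENNReal.ofReal (pplus W t j n u) ∂μ)
          = ∫⁻ t in I, Stmt6Aux.pT W n (n - j) (t, u) ∂μ := by
        refine lintegral_congr_ae ((ae_restrict_iff' hImeas).2 (ae_of_all _ fun t ht => ?_))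
        show ENNReal.ofReal (pplus W t j n u) = Stmt6Aux.pT W n (n - j) (t, u)
        rw [(Stmt6Aux.pT_eq hI hG ht n (n - j) (by omega) u huI).1,
          show n - (n - j) = j by omega]
      rw [h1]
      exact hvanish x _ fun t htI htx =>
        Stmt6Aux.pT_of_not_le fun hc => htx (mem_Iic.2 (hc.trans hux))
  -- the key additive formula for `Q`
  have hstar : ∀ j, j < n → ∀ z ∈ I, ∀ x ∈ I, z ≤ x →
      Q j x = Q j z
        + ∫⁻ u in Ioc z x, (∫⁻ t in I, ENNReal.ofReal (pplus w t (j + 1) n u) ∂μ) := by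
    intro j hj z hz x hx hzx
    haveI := hμSfin x hx
    have hjne : j ≠ n := hj.ne
    have hQx : Q j x = ∫⁻ t in I ∩ Iic x, Stmt6Aux.gT W n j (t, x) ∂μ :=
      hvanish x _ fun t _ htx => by
        unfold Stmt6Aux.gT
        exact if_neg fun hc => htx (mem_Iic.2 hc)
    have hQz : Q j z = ∫⁻ t in I ∩ Iic x, Stmt6Aux.gT W n j (t, z) ∂μ :=
      hvanish x _ fun t _ htx => by
        unfold Stmt6Aux.gT
        exact if_neg fun hc => htx (mem_Iic.2 (hc.trans hzx))
    have hpoint : ∀ t : ℝ, Stmt6Aux.gT W n j (t, x)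
        = Stmt6Aux.gT W n j (t, z)
          + ∫⁻ u in Ioc z x, Stmt6Aux.pT W n (n - (j + 1)) (t, u) := by
      intro t
      rcases le_or_gt t z with h1 | h1
      · unfold Stmt6Aux.gT
        rw [if_pos (h1.trans hzx), if_pos h1, if_neg hjne, if_neg hjne,
          ← lintegral_union measurableSet_Ioc (Ioc_disjoint_Ioc_of_le le_rfl),
          Ioc_union_Ioc_eq_Ioc h1 hzx]
      · have hgz : Stmt6Aux.gT W n j (t, z) = 0 := by
          unfold Stmt6Aux.gT
          exact if_neg (not_le.2 h1)
        rw [hgz, zero_add]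
        rcases le_or_gt t x with h2 | h2
        · unfold Stmt6Aux.gT
          rw [if_pos h2, if_neg hjne]
          have hz0 : (∫⁻ u in Ioc z t, Stmt6Aux.pT W n (n - (j + 1)) (t, u)) = 0 := by
            rw [← Measure.restrict_congr_set Ioo_ae_eq_Ioc,
              lintegral_congr_ae ((ae_restrict_iff' measurableSet_Ioo).2
                (ae_of_all _ fun u hu => Stmt6Aux.pT_of_not_le (not_le.2 hu.2)))]
            exact lintegral_zero
          rw [← Ioc_union_Ioc_eq_Ioc h1.le h2,
            lintegral_union measurableSet_Ioc (Ioc_disjoint_Ioc_of_le le_rfl), hz0, zero_add]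
        · have hgx : Stmt6Aux.gT W n j (t, x) = 0 := by
            unfold Stmt6Aux.gT
            exact if_neg (not_le.2 h2)
          have hD0 : (∫⁻ u in Ioc z x, Stmt6Aux.pT W n (n - (j + 1)) (t, u)) = 0 := by
            rw [lintegral_congr_ae ((ae_restrict_iff' measurableSet_Ioc).2
              (ae_of_all _ fun u hu => Stmt6Aux.pT_of_not_le (not_le.2 (hu.2.trans_lt h2))))]
            exact lintegral_zero
          rw [hgx, hD0]
    have hgTzmeas : Measurable fun t => Stmt6Aux.gT W n j (t, z) :=
      (Stmt6Aux.measurable_gT hWmeas n j).comp (measurable_id.prodMk measurable_const)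
    calc Q j x = ∫⁻ t in I ∩ Iic x, Stmt6Aux.gT W n j (t, x) ∂μ := hQx
      _ = ∫⁻ t in I ∩ Iic x, (Stmt6Aux.gT W n j (t, z)
            + ∫⁻ u in Ioc z x, Stmt6Aux.pT W n (n - (j + 1)) (t, u)) ∂μ :=
          lintegral_congr fun t => hpoint t
      _ = (∫⁻ t in I ∩ Iic x, Stmt6Aux.gT W n j (t, z) ∂μ)
            + ∫⁻ t in I ∩ Iic x, (∫⁻ u in Ioc z x, Stmt6Aux.pT W n (n - (j + 1)) (t, u)) ∂μ :=
          lintegral_add_left hgTzmeas _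
      _ = Q j z + ∫⁻ u in Ioc z x,
            (∫⁻ t in I ∩ Iic x, Stmt6Aux.pT W n (n - (j + 1)) (t, u) ∂μ) := by
          rw [← hQz]
          congr 1
          exact lintegral_lintegral_swap
            (f := fun t u => Stmt6Aux.pT W n (n - (j + 1)) (t, u))
            (((Stmt6Aux.measurable_pT hWmeas n _).comp
              (measurable_fst.prodMk measurable_snd)).aemeasurable)
      _ = Q j z + ∫⁻ u in Ioc z x,
            (∫⁻ t in I, ENNReal.ofReal (pplus w t (j + 1) n u) ∂μ) := by
          congr 1
          refine setLIntegral_congr_fun measurableSet_Ioc (fun u hu => ?_)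
          have huI : u ∈ I := hI.out hz hx ⟨hu.1.le, hu.2⟩
          have h1 : (∫⁻ t in I ∩ Iic x, Stmt6Aux.pT W n (n - (j + 1)) (t, u) ∂μ)
              = ∫⁻ t in I, Stmt6Aux.pT W n (n - (j + 1)) (t, u) ∂μ :=
            (hvanish x _ fun t _ htx =>
              Stmt6Aux.pT_of_not_le fun hc => htx (mem_Iic.2 (hc.trans hu.2))).symm
          rw [h1, hswitch (j + 1) u huI]
          refine lintegral_congr_ae ((ae_restrict_iff' hImeas).2 (ae_of_all _ fun t ht => ?_))
          show Stmt6Aux.pT W n (n - (j + 1)) (t, u) = ENNReal.ofReal (pplus W t (j + 1) n u)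
          rw [(Stmt6Aux.pT_eq hI hG ht n (n - (j + 1)) (by omega) u huI).1,
            show n - (n - (j + 1)) = j + 1 by omega]
  -- division identity
  have hψeq : ∀ j, ∀ u ∈ I,
      (∫⁻ t in I, ENNReal.ofReal (pplus w t j n u) ∂μ).toReal / w j u * w j u
        = (∫⁻ t in I, ENNReal.ofReal (pplus w t j n u) ∂μ).toReal := by
    intro j u hu
    rw [div_mul_cancel₀ _ (hwpos j u hu).ne']
  -- the key integrability/Newton-Leibniz statement for `z ≤ x`
  have hkey : ∀ j, j < n → ∀ z ∈ I, ∀ x ∈ I, z ≤ x →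
      IntervalIntegrable (fun u =>
        (∫⁻ t in I, ENNReal.ofReal (pplus w t (j + 1) n u) ∂μ).toReal / w (j + 1) u
          * w (j + 1) u) volume z x ∧
      (∫⁻ t in I, ENNReal.ofReal (pplus w t j n x) ∂μ).toReal / w j x
        = (∫⁻ t in I, ENNReal.ofReal (pplus w t j n z) ∂μ).toReal / w j z
          + ∫ u in z..x,
              (∫⁻ t in I, ENNReal.ofReal (pplus w t (j + 1) n u) ∂μ).toReal / w (j + 1) u
                * w (j + 1) u := by
    intro j hj z hz x hx hzx
    obtain ⟨R, hRmeas, hReq⟩ := hHJmeas (j + 1) (by omega) x hx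
    have hIcc : Icc z x ⊆ I := hI.out hz hx
    have hae : ∀ u ∈ Ioc z x,
        (∫⁻ t in I, ENNReal.ofReal (pplus w t (j + 1) n u) ∂μ).toReal / w (j + 1) u
          * w (j + 1) u = (R u).toReal := by
      intro u hu
      have huI : u ∈ I := hIcc ⟨hu.1.le, hu.2⟩
      rw [hψeq (j + 1) u huI, hReq u huI hu.2]
    have hsm : AEStronglyMeasurable (fun u =>
        (∫⁻ t in I, ENNReal.ofReal (pplus w t (j + 1) n u) ∂μ).toReal / w (j + 1) u
          * w (j + 1) u) (volume.restrict (Ioc z x)) := by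
      refine AEStronglyMeasurable.congr
        (hRmeas.ennreal_toReal.aestronglyMeasurable.restrict) ?_
      exact (ae_restrict_iff' measurableSet_Ioc).2 (ae_of_all _ fun u hu => (hae u hu).symm)
    have hnonnegae : 0 ≤ᵐ[volume.restrict (Ioc z x)] fun u =>
        (∫⁻ t in I, ENNReal.ofReal (pplus w t (j + 1) n u) ∂μ).toReal / w (j + 1) u
          * w (j + 1) u := by
      refine (ae_restrict_iff' measurableSet_Ioc).2 (ae_of_all _ fun u hu => ?_)
      have huI : u ∈ I := hIcc ⟨hu.1.le, hu.2⟩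
      exact mul_nonneg (hnonneg (j + 1) u huI) (hwpos (j + 1) u huI).le
    have hofReal : (∫⁻ u in Ioc z x, ENNReal.ofReal
          ((∫⁻ t in I, ENNReal.ofReal (pplus w t (j + 1) n u) ∂μ).toReal / w (j + 1) u
            * w (j + 1) u))
        = ∫⁻ u in Ioc z x, (∫⁻ t in I, ENNReal.ofReal (pplus w t (j + 1) n u) ∂μ) := by
      refine lintegral_congr_ae ((ae_restrict_iff' measurableSet_Ioc).2
        (ae_of_all _ fun u hu => ?_))
      have huI : u ∈ I := hIcc ⟨hu.1.le, hu.2⟩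
      show ENNReal.ofReal _ = _
      rw [hψeq (j + 1) u huI, ENNReal.ofReal_toReal (hfin (j + 1) (by omega) u huI)]
    have hTfin : (∫⁻ u in Ioc z x,
        (∫⁻ t in I, ENNReal.ofReal (pplus w t (j + 1) n u) ∂μ)) ≠ ⊤ := by
      intro htop
      apply hC2 j hj.le x hx
      rw [hstar j hj z hz x hx hzx, htop, add_top]
    have hint : IntervalIntegrable (fun u =>
        (∫⁻ t in I, ENNReal.ofReal (pplus w t (j + 1) n u) ∂μ).toReal / w (j + 1) u
          * w (j + 1) u) volume z x := by
      constructor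
      · refine ⟨hsm, ?_⟩
        rw [hasFiniteIntegral_iff_ofReal hnonnegae, hofReal]
        exact hTfin.lt_top
      · rw [Ioc_eq_empty (not_lt.2 hzx)]
        exact integrableOn_empty
    refine ⟨hint, ?_⟩
    have hval : (∫ u in z..x,
        (∫⁻ t in I, ENNReal.ofReal (pplus w t (j + 1) n u) ∂μ).toReal / w (j + 1) u
          * w (j + 1) u)
        = (∫⁻ u in Ioc z x,
            (∫⁻ t in I, ENNReal.ofReal (pplus w t (j + 1) n u) ∂μ)).toReal := by
      rw [intervalIntegral.integral_of_le hzx,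
        integral_eq_lintegral_of_nonneg_ae hnonnegae hsm, hofReal]
    rw [hC3 j hj.le x hx, hC3 j hj.le z hz, hval, hstar j hj z hz x hx hzx,
      ENNReal.toReal_add (hC2 j hj.le z hz) hTfin]
  -- the LD (one-sided continuity) property of the top derivative
  have hLD : IsLD I (fun x =>
      (∫⁻ t in I, ENNReal.ofReal (pplus w t n n x) ∂μ).toReal / w n x) := by
    constructor
    · rintro x hx ⟨y, hy, hxy⟩
      show Tendsto _ _ (nhds ((∫⁻ t in I, ENNReal.ofReal (pplus w t n n x) ∂μ).toReal / w n x))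
      rw [hdn x hx]
      refine Tendsto.congr'
        (eventuallyEq_of_mem self_mem_nhdsWithin fun u hu => (hdn u hu.1).symm) ?_
      rw [Metric.tendsto_nhdsWithin_nhds]
      intro ε hε
      set B : ℕ → Set ℝ := fun m => I ∩ Iic y ∩ Ioc x (x + 1 / (m + 1)) with hB
      have hBmeas : ∀ m, MeasurableSet (B m) :=
        fun m => (hImeas.inter measurableSet_Iic).inter measurableSet_Ioc
      have hBanti : Antitone B := by
        intro a b hab
        refine inter_subset_inter le_rfl (Ioc_subset_Ioc_right (add_le_add_right ?_ x))
        exact one_div_le_one_div_of_le (by positivity)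
          (add_le_add_left (Nat.cast_le.2 hab) 1)
      have hBempty : ⋂ m, B m = ∅ := by
        ext u
        simp only [mem_iInter, mem_empty_iff_false, iff_false]
        intro hu
        obtain ⟨m, hm⟩ := exists_nat_one_div_lt (sub_pos.2 (hu 0).2.1)
        have h2 := (hu m).2.2
        have h3 : (1 : ℝ) / (m + 1) < u - x := hm
        linarith
      have hB0 : μ (B 0) ≠ ⊤ := by
        intro htop
        exact hμfin y hy (top_le_iff.1 (htop ▸ measure_mono
          (inter_subset_left : B 0 ⊆ I ∩ Iic y)))
      have htendB := MeasureTheory.tendsto_measure_iInter_atTop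
        (fun m => (hBmeas m).nullMeasurableSet) hBanti ⟨0, hB0⟩
      rw [hBempty, measure_empty] at htendB
      obtain ⟨m, hm⟩ := (htendB.eventually
        (gt_mem_nhds (ENNReal.ofReal_pos.2 hε))).exists
      refine ⟨min (1 / (m + 1 : ℝ)) (y - x), lt_min (by positivity) (sub_pos.2 hxy), ?_⟩
      intro u hu hdist
      obtain ⟨huI, hxu⟩ := hu
      have hxu : x < u := hxu
      have hdu : u - x < min (1 / (m + 1 : ℝ)) (y - x) := by
        rwa [Real.dist_eq, abs_of_pos (sub_pos.2 hxu)] at hdist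
      have huy : u ≤ y := by
        have := hdu.trans_le (min_le_right _ _); linarith
      have hum : u ≤ x + 1 / (m + 1) := by
        have := hdu.trans_le (min_le_left _ _); linarith
      have hsplit : μ (I ∩ Iic u) = μ (I ∩ Iic x) + μ (I ∩ Ioc x u) := by
        have hun : I ∩ Iic u = (I ∩ Iic x) ∪ (I ∩ Ioc x u) := by
          rw [← inter_union_distrib_left, Iic_union_Ioc_eq_Iic hxu.le]
        rw [hun, measure_union ((Iic_disjoint_Ioc le_rfl).mono
          inter_subset_right inter_subset_right) (hImeas.inter measurableSet_Ioc)]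
      have hfinx : μ (I ∩ Iic x) ≠ ⊤ := hμfin x hx
      have hfinu2 : μ (I ∩ Ioc x u) ≠ ⊤ := by
        intro htop
        exact hμfin u huI (by rw [hsplit, htop, add_top])
      have hsub : I ∩ Ioc x u ⊆ B m := by
        rintro v ⟨hvI, hvx, hvu⟩
        exact ⟨⟨hvI, hvu.trans huy⟩, hvx, hvu.trans hum⟩
      show |(μ (I ∩ Iic u)).toReal - (μ (I ∩ Iic x)).toReal| < ε
      have hle : (μ (I ∩ Iic x)).toReal ≤ (μ (I ∩ Iic u)).toReal :=
        ENNReal.toReal_mono (by rw [hsplit]; exact ENNReal.add_ne_top.2 ⟨hfinx, hfinu2⟩)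
          (measure_mono (inter_subset_inter le_rfl (Iic_subset_Iic.2 hxu.le)))
      rw [abs_of_nonneg (sub_nonneg.2 hle), hsplit, ENNReal.toReal_add hfinx hfinu2]
      have hb1 : (μ (I ∩ Ioc x u)).toReal ≤ (μ (B m)).toReal :=
        ENNReal.toReal_mono (hm.trans ENNReal.ofReal_lt_top).ne (measure_mono hsub)
      have hb2 : (μ (B m)).toReal < ε :=
        (ENNReal.lt_ofReal_iff_toReal_lt (hm.trans ENNReal.ofReal_lt_top).ne).1 hm
      linarith
    · intro x hx hmax
      have hμx : μ {x} = 0 := hμb x hx hmax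
      show Tendsto _ _ (nhds ((∫⁻ t in I, ENNReal.ofReal (pplus w t n n x) ∂μ).toReal / w n x))
      rw [hdn x hx]
      refine Tendsto.congr'
        (eventuallyEq_of_mem self_mem_nhdsWithin fun u hu => (hdn u hu.1).symm) ?_
      rw [Metric.tendsto_nhdsWithin_nhds]
      intro ε hε
      set C : ℕ → Set ℝ := fun m => I ∩ Ioo (x - 1 / (m + 1)) x with hCdef
      have hCmeas : ∀ m, MeasurableSet (C m) := fun m => hImeas.inter measurableSet_Ioo
      have hCanti : Antitone C := by
        intro a b hab
        refine inter_subset_inter le_rfl (Ioo_subset_Ioo_left ?_)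
        have : (1 : ℝ) / (b + 1) ≤ 1 / (a + 1) :=
          one_div_le_one_div_of_le (by positivity) (add_le_add_left (Nat.cast_le.2 hab) 1)
        linarith
      have hCempty : ⋂ m, C m = ∅ := by
        ext u
        simp only [mem_iInter, mem_empty_iff_false, iff_false]
        intro hu
        obtain ⟨m, hm⟩ := exists_nat_one_div_lt (sub_pos.2 (hu 0).2.2)
        have h2 := (hu m).2.1
        have h3 : (1 : ℝ) / (m + 1) < x - u := hm
        linarith
      have hC0 : μ (C 0) ≠ ⊤ := by
        intro htop
        refine hμfin x hx (top_le_iff.1 (htop ▸ measure_mono ?_))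
        exact fun v hv => ⟨hv.1, hv.2.2.le⟩
      have htendC := MeasureTheory.tendsto_measure_iInter_atTop
        (fun m => (hCmeas m).nullMeasurableSet) hCanti ⟨0, hC0⟩
      rw [hCempty, measure_empty] at htendC
      obtain ⟨m, hm⟩ := (htendC.eventually
        (gt_mem_nhds (ENNReal.ofReal_pos.2 hε))).exists
      refine ⟨1 / (m + 1), by positivity, ?_⟩
      intro u hu hdist
      obtain ⟨huI, hux⟩ := hu
      have hux : u < x := hux
      have hdu : x - u < 1 / (m + 1) := by
        rwa [Real.dist_eq, abs_of_neg (sub_neg.2 hux), neg_sub] at hdist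
      have hsplit : μ (I ∩ Iic x) = μ (I ∩ Iic u) + μ (I ∩ Ioc u x) := by
        have hun : I ∩ Iic x = (I ∩ Iic u) ∪ (I ∩ Ioc u x) := by
          rw [← inter_union_distrib_left, Iic_union_Ioc_eq_Iic hux.le]
        rw [hun, measure_union ((Iic_disjoint_Ioc le_rfl).mono
          inter_subset_right inter_subset_right) (hImeas.inter measurableSet_Ioc)]
      have hfinx : μ (I ∩ Iic x) ≠ ⊤ := hμfin x hx
      have hfin1 : μ (I ∩ Iic u) ≠ ⊤ := hμfin u huI
      have hfin2 : μ (I ∩ Ioc u x) ≠ ⊤ := by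
        intro htop
        exact hfinx (by rw [hsplit, htop, add_top])
      have hbound : μ (I ∩ Ioc u x) ≤ μ (C m) := by
        calc μ (I ∩ Ioc u x) ≤ μ ((I ∩ Ioo u x) ∪ {x}) := by
              refine measure_mono ?_
              rintro v ⟨hvI, hvu, hvx⟩
              rcases eq_or_lt_of_le hvx with hvx' | hvx'
              · exact Or.inr (by simp [hvx'])
              · exact Or.inl ⟨hvI, hvu, hvx'⟩
          _ ≤ μ (I ∩ Ioo u x) + μ {x} := measure_union_le _ _
          _ = μ (I ∩ Ioo u x) := by rw [hμx, add_zero]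
          _ ≤ μ (C m) := by
              refine measure_mono ?_
              rintro v ⟨hvI, hvu, hvx⟩
              exact ⟨hvI, by linarith, hvx⟩
      show |(μ (I ∩ Iic u)).toReal - (μ (I ∩ Iic x)).toReal| < ε
      have hle : (μ (I ∩ Iic u)).toReal ≤ (μ (I ∩ Iic x)).toReal :=
        ENNReal.toReal_mono hfinx
          (measure_mono (inter_subset_inter le_rfl (Iic_subset_Iic.2 hux.le)))
      rw [abs_of_nonpos (sub_nonpos.2 hle), neg_sub, hsplit,
        ENNReal.toReal_add hfin1 hfin2]
      have hb1 : (μ (I ∩ Ioc u x)).toReal ≤ (μ (C m)).toReal :=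
        ENNReal.toReal_mono (hm.trans ENNReal.ofReal_lt_top).ne hbound
      have hb2 : (μ (C m)).toReal < ε :=
        (ENNReal.lt_ofReal_iff_toReal_lt (hm.trans ENNReal.ofReal_lt_top).ne).1 hm
      linarith
  -- assembling the generalized-derivative structure
  have hGen : IsGenL I w n h
      (fun j x => (∫⁻ t in I, ENNReal.ofReal (pplus w t j n x) ∂μ).toReal / w j x) := by
    refine ⟨?_, hLD, ?_, ?_⟩
    · intro x hx
      rw [hh x hx]
      show (∫⁻ t in I, ENNReal.ofReal (pplus w t 0 n x) ∂μ).toReal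
          = (∫⁻ t in I, ENNReal.ofReal (pplus w t 0 n x) ∂μ).toReal / w 0 x * w 0 x
      rw [div_mul_cancel₀ _ (hwpos 0 x hx).ne']
    · intro j hjn z hz x hx
      rcases le_total z x with hzx | hxz
      · exact (hkey j hjn z hz x hx hzx).1
      · exact ((hkey j hjn x hx z hz hxz).1).symm
    · intro j hjn z hz x hx
      rcases le_total z x with hzx | hxz
      · exact (hkey j hjn z hz x hx hzx).2
      · have h2 := (hkey j hjn x hx z hz hxz).2
        show (∫⁻ t in I, ENNReal.ofReal (pplus w t j n x) ∂μ).toReal / w j x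
            = (∫⁻ t in I, ENNReal.ofReal (pplus w t j n z) ∂μ).toReal / w j z
              + ∫ u in z..x,
                  (∫⁻ t in I, ENNReal.ofReal (pplus w t (j + 1) n u) ∂μ).toReal / w (j + 1) u
                    * w (j + 1) u
        rw [h2, intervalIntegral.integral_symm x z]
        ring
  refine ⟨hGen, ?_, hGen, ?_⟩
  · intro j hj
    exact ⟨fun x hx => hnonneg j x hx, hmono j hj⟩
  · intro j _ hj2
    exact hmono j hj2

end
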